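/- Let γ, γ̃ ∈ ℂ with γ, γ̃ ≠ 0, and let A, Ã be complex symmetric n×n matrices with operator norms satisfying 4‖A‖ ≤ (1-|γ|²)/|γ|² and 4‖Ã‖ ≤ (1-|γ̃|²)/|γ̃|². Set γ̂ = γ̃γ and Â = Ã + γ̃⁻²A. Then 4‖Â‖ ≤ (1-|γ̂|²)/|γ̂|². -/

import Mathlib

open Matrix
set_option synthInstance.maxHeartbeats 400000
set_option maxHeartbeats 800000

theorem stmt_15 (n : ℕ) (γ γt : ℂ) (hγ : γ ≠ 0) (hγt : γt ≠ 0)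
    (A At : Matrix (Fin n) (Fin n) ℂ) (hA : Aᵀ = A) (hAt : Atᵀ = At)
    (hnA : 4 * ‖Matrix.toEuclideanCLM (𝕜 := ℂ) A‖ ≤ (1 - ‖γ‖ ^ 2) / ‖γ‖ ^ 2)
    (hnAt : 4 * ‖Matrix.toEuclideanCLM (𝕜 := ℂ) At‖ ≤ (1 - ‖γt‖ ^ 2) / ‖γt‖ ^ 2) :
    4 * ‖Matrix.toEuclideanCLM (𝕜 := ℂ) (At + γt⁻¹ ^ 2 • A)‖
      ≤ (1 - ‖γt * γ‖ ^ 2) / ‖γt * γ‖ ^ 2 := by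
  have hmap : Matrix.toEuclideanCLM (𝕜 := ℂ) (At + γt⁻¹ ^ 2 • A)
      = Matrix.toEuclideanCLM (𝕜 := ℂ) At + γt⁻¹ ^ 2 • Matrix.toEuclideanCLM (𝕜 := ℂ) A := by
    simp [map_add, _root_.map_smul]
  have htri : ‖Matrix.toEuclideanCLM (𝕜 := ℂ) (At + γt⁻¹ ^ 2 • A)‖
      ≤ ‖Matrix.toEuclideanCLM (𝕜 := ℂ) At‖
        + (‖γt‖)⁻¹ ^ 2 * ‖Matrix.toEuclideanCLM (𝕜 := ℂ) A‖ := by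
    rw [hmap]
    have h2 := norm_smul_le (γt⁻¹ ^ 2) (Matrix.toEuclideanCLM (𝕜 := ℂ) A)
    have h3 : ‖γt⁻¹ ^ 2‖ = (‖γt‖)⁻¹ ^ 2 := by
      simp [map_pow]
    have h4 := norm_add_le (Matrix.toEuclideanCLM (𝕜 := ℂ) At)
      (γt⁻¹ ^ 2 • Matrix.toEuclideanCLM (𝕜 := ℂ) A)
    rw [h3] at h2
    linarith
  set a := ‖Matrix.toEuclideanCLM (𝕜 := ℂ) A‖ with ha
  set b := ‖Matrix.toEuclideanCLM (𝕜 := ℂ) At‖ with hb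
  have hg : 0 < ‖γ‖ := norm_pos_iff.mpr hγ
  have hgt : 0 < ‖γt‖ := norm_pos_iff.mpr hγt
  set t := ‖γ‖
  set s := ‖γt‖
  have hmul : ‖γt * γ‖ = s * t := norm_mul γt γ
  rw [hmul]
  have key : 4 * (b + s⁻¹ ^ 2 * a) ≤ (1 - (s * t) ^ 2) / (s * t) ^ 2 := by
    have h1 : (1 - (s * t) ^ 2) / (s * t) ^ 2
        = (1 - s ^ 2) / s ^ 2 + s⁻¹ ^ 2 * ((1 - t ^ 2) / t ^ 2) := by
      field_simp
      ring
    rw [h1]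
    have h2 : 4 * (s⁻¹ ^ 2 * a) ≤ s⁻¹ ^ 2 * ((1 - t ^ 2) / t ^ 2) := by
      rw [show (4:ℝ) * (s⁻¹ ^ 2 * a) = s⁻¹ ^ 2 * (4 * a) by ring]
      gcongr
    linarith
  calc 4 * ‖Matrix.toEuclideanCLM (𝕜 := ℂ) (At + γt⁻¹ ^ 2 • A)‖
      ≤ 4 * (b + s⁻¹ ^ 2 * a) := by linarith [htri]
    _ ≤ _ := key
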